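/- Let P ∈ ℤ[x] of degree d with positive leading coefficient and at least two distinct complex roots, and suppose P(n) > 0 for n > 0. For positive integers λ, N and z, define G(N, z) as the number of triples (x, a, b) ∈ {1,…,N} × {1,…,λ}² with a·z = b·P(x) and a < b. Assuming that for distinct positive integers a < b every complex irreducible component of the curve a·P(y) = b·P(x) contains at most C_ε·N^{1/2+ε} integral points in {1,…,N}², conclude that ∑_{y=1}^{N} G(N, P(y)) ≤ C'_ε · λ² · N^{1/2+ε}. -/

import Mathlib

theorem stmt_15 (P : Polynomial ℤ) (hd : 2 ≤ P.natDegree) (hlc : 0 < P.leadingCoeff)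
    (hroots : 2 ≤ (P.map (Int.castRingHom ℂ)).roots.toFinset.card)
    (hpos : ∀ n : ℤ, 0 < n → 0 < P.eval n)
    (ε : ℝ) (hε : 0 < ε) (C : ℝ) (hC : 0 ≤ C)
    (hBP : ∀ N a b : ℕ, 0 < N → 0 < a → a < b →
      (Nat.card {p : ℕ × ℕ // p.1 ∈ Finset.Icc 1 N ∧ p.2 ∈ Finset.Icc 1 N ∧
          (a : ℤ) * P.eval (p.2 : ℤ) = (b : ℤ) * P.eval (p.1 : ℤ)} : ℝ)
        ≤ C * (N : ℝ) ^ ((1 : ℝ) / 2 + ε)) :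
    ∃ C' : ℝ, 0 < C' ∧ ∀ N lam : ℕ, 0 < N → 0 < lam →
      ((∑ y ∈ Finset.Icc 1 N,
        Nat.card {t : ℕ × ℕ × ℕ // t.1 ∈ Finset.Icc 1 N ∧
          t.2.1 ∈ Finset.Icc 1 lam ∧ t.2.2 ∈ Finset.Icc 1 lam ∧
          (t.2.1 : ℤ) * P.eval (y : ℤ) = (t.2.2 : ℤ) * P.eval (t.1 : ℤ) ∧
          t.2.1 < t.2.2}) : ℝ)
        ≤ C' * (lam : ℝ) ^ 2 * (N : ℝ) ^ ((1 : ℝ) / 2 + ε) := by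
  refine ⟨C + 1, by linarith, ?_⟩
  intro N lam hN hlam
  set S := Finset.Icc 1 N with hS
  set T := Finset.Icc 1 lam with hT
  have hpow : (0:ℝ) ≤ (N : ℝ) ^ ((1 : ℝ) / 2 + ε) := by positivity
  -- step 1: Nat.card as finset card
  have key : ∀ y : ℕ,
      Nat.card {t : ℕ × ℕ × ℕ // t.1 ∈ Finset.Icc 1 N ∧
          t.2.1 ∈ Finset.Icc 1 lam ∧ t.2.2 ∈ Finset.Icc 1 lam ∧
          (t.2.1 : ℤ) * P.eval (y : ℤ) = (t.2.2 : ℤ) * P.eval (t.1 : ℤ) ∧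
          t.2.1 < t.2.2}
        = ((S ×ˢ T ×ˢ T).filter (fun t =>
            (t.2.1 : ℤ) * P.eval (y : ℤ) = (t.2.2 : ℤ) * P.eval (t.1 : ℤ) ∧
            t.2.1 < t.2.2)).card := by
    intro y
    rw [← Nat.card_eq_finsetCard]
    refine Nat.card_congr (Equiv.subtypeEquivRight ?_)
    intro t
    simp only [Finset.mem_coe, Finset.mem_filter, Finset.mem_product]
    tauto
  -- step 2: per (a,b) bound
  have hBP' : ∀ a ∈ T, ∀ b ∈ T,
      ((((S ×ˢ S).filter (fun p : ℕ × ℕ =>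
          (a:ℤ) * P.eval (p.2:ℤ) = (b:ℤ) * P.eval (p.1:ℤ) ∧ a < b)).card : ℝ))
        ≤ C * (N : ℝ) ^ ((1 : ℝ) / 2 + ε) := by
    intro a ha b hb
    by_cases hab : a < b
    · have h0a : 0 < a := (Finset.mem_Icc.mp ha).1
      have hcard : (((S ×ˢ S).filter (fun p : ℕ × ℕ =>
          (a:ℤ) * P.eval (p.2:ℤ) = (b:ℤ) * P.eval (p.1:ℤ) ∧ a < b)).card)
          = Nat.card {p : ℕ × ℕ // p.1 ∈ Finset.Icc 1 N ∧ p.2 ∈ Finset.Icc 1 N ∧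
            (a : ℤ) * P.eval (p.2 : ℤ) = (b : ℤ) * P.eval (p.1 : ℤ)} := by
        rw [← Nat.card_eq_finsetCard]
        refine Nat.card_congr (Equiv.subtypeEquivRight ?_)
        intro p
        simp only [Finset.mem_coe, Finset.mem_filter, Finset.mem_product, hS]
        tauto
      rw [hcard]
      exact hBP N a b hN h0a hab
    · have : ((S ×ˢ S).filter (fun p : ℕ × ℕ =>
          (a:ℤ) * P.eval (p.2:ℤ) = (b:ℤ) * P.eval (p.1:ℤ) ∧ a < b)) = ∅ := by
        refine Finset.filter_false_of_mem ?_
        intro p _ h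
        exact hab h.2
      rw [this]
      simpa using mul_nonneg hC hpow
  -- step 3: counting identity
  have count : (∑ y ∈ S, ((S ×ˢ T ×ˢ T).filter (fun t =>
            (t.2.1 : ℤ) * P.eval (y : ℤ) = (t.2.2 : ℤ) * P.eval (t.1 : ℤ) ∧
            t.2.1 < t.2.2)).card)
      = ∑ a ∈ T, ∑ b ∈ T, ((S ×ˢ S).filter (fun p : ℕ × ℕ =>
          (a:ℤ) * P.eval (p.2:ℤ) = (b:ℤ) * P.eval (p.1:ℤ) ∧ a < b)).card := by
    simp only [Finset.card_filter, Finset.sum_product]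
    calc ∑ y ∈ S, ∑ x ∈ S, ∑ a ∈ T, ∑ b ∈ T,
          (if (a:ℤ) * P.eval (y:ℤ) = (b:ℤ) * P.eval (x:ℤ) ∧ a < b then 1 else 0)
        = ∑ y ∈ S, ∑ a ∈ T, ∑ x ∈ S, ∑ b ∈ T,
          (if (a:ℤ) * P.eval (y:ℤ) = (b:ℤ) * P.eval (x:ℤ) ∧ a < b then 1 else 0) :=
          Finset.sum_congr rfl fun y _ => Finset.sum_comm
      _ = ∑ a ∈ T, ∑ y ∈ S, ∑ x ∈ S, ∑ b ∈ T,
          (if (a:ℤ) * P.eval (y:ℤ) = (b:ℤ) * P.eval (x:ℤ) ∧ a < b then 1 else 0) :=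
          Finset.sum_comm
      _ = ∑ a ∈ T, ∑ y ∈ S, ∑ b ∈ T, ∑ x ∈ S,
          (if (a:ℤ) * P.eval (y:ℤ) = (b:ℤ) * P.eval (x:ℤ) ∧ a < b then 1 else 0) :=
          Finset.sum_congr rfl fun a _ => Finset.sum_congr rfl fun y _ => Finset.sum_comm
      _ = ∑ a ∈ T, ∑ b ∈ T, ∑ y ∈ S, ∑ x ∈ S,
          (if (a:ℤ) * P.eval (y:ℤ) = (b:ℤ) * P.eval (x:ℤ) ∧ a < b then 1 else 0) :=
          Finset.sum_congr rfl fun a _ => Finset.sum_comm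
      _ = ∑ a ∈ T, ∑ b ∈ T, ∑ x ∈ S, ∑ y ∈ S,
          (if (a:ℤ) * P.eval (y:ℤ) = (b:ℤ) * P.eval (x:ℤ) ∧ a < b then 1 else 0) :=
          Finset.sum_congr rfl fun a _ => Finset.sum_congr rfl fun b _ => Finset.sum_comm
  -- put it together
  simp only [hS, hT] at key ⊢
  simp only [key]
  calc (∑ y ∈ S, (((S ×ˢ T ×ˢ T).filter (fun t =>
            (t.2.1 : ℤ) * P.eval (y : ℤ) = (t.2.2 : ℤ) * P.eval (t.1 : ℤ) ∧
            t.2.1 < t.2.2)).card : ℝ))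
      = ((∑ a ∈ T, ∑ b ∈ T, ((S ×ˢ S).filter (fun p : ℕ × ℕ =>
          (a:ℤ) * P.eval (p.2:ℤ) = (b:ℤ) * P.eval (p.1:ℤ) ∧ a < b)).card : ℕ) : ℝ) := by
        rw [← count]; push_cast; ring
    _ = ∑ a ∈ T, ∑ b ∈ T, (((S ×ˢ S).filter (fun p : ℕ × ℕ =>
          (a:ℤ) * P.eval (p.2:ℤ) = (b:ℤ) * P.eval (p.1:ℤ) ∧ a < b)).card : ℝ) := by
        push_cast; ring
    _ ≤ ∑ a ∈ T, ∑ b ∈ T, C * (N : ℝ) ^ ((1 : ℝ) / 2 + ε) := by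
        refine Finset.sum_le_sum fun a ha => Finset.sum_le_sum fun b hb => hBP' a ha b hb
    _ = (T.card : ℝ) * (T.card : ℝ) * (C * (N : ℝ) ^ ((1 : ℝ) / 2 + ε)) := by
        simp [Finset.sum_const]; ring
    _ ≤ (C + 1) * (lam : ℝ) ^ 2 * (N : ℝ) ^ ((1 : ℝ) / 2 + ε) := by
        have : (T.card : ℝ) = (lam : ℝ) := by simp [hT]
        rw [this]
        have h1 : (0:ℝ) ≤ (lam:ℝ) := by positivity
        nlinarith [mul_nonneg (mul_nonneg h1 h1) hpow]
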